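/- A statistic ĝ(X) with finite second moments under every P_θ is a UMVUE of its expectation if and only if E_θ[ĝ(X)·χ(X)] = 0 for every θ ∈ Θ and every statistic χ(X) with E_θ χ(X) = 0 and E_θ|χ(X)|² < ∞ for all θ ∈ Θ. -/

import Mathlib

open MeasureTheory ProbabilityTheory

/-- `χ` is a square-integrable unbiased estimator of zero for the family `P`. -/
def IsUEZero {𝓧 Θ : Type*} [MeasurableSpace 𝓧] (P : Θ → Measure 𝓧) (χ : 𝓧 → ℝ) : Prop :=
  Measurable χ ∧ (∀ θ, MemLp χ 2 (P θ)) ∧ ∀ θ, ∫ x, χ x ∂P θ = 0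

/-- `g` is a UMVUE: minimal variance at every `θ` among all unbiased estimators
(with finite second moments) of the same parametric function. -/
def IsUMVUE {𝓧 Θ : Type*} [MeasurableSpace 𝓧] (P : Θ → Measure 𝓧) (g : 𝓧 → ℝ) : Prop :=
  Measurable g ∧ (∀ θ, MemLp g 2 (P θ)) ∧
    ∀ g' : 𝓧 → ℝ, Measurable g' → (∀ θ, MemLp g' 2 (P θ)) →
      (∀ θ, ∫ x, g' x ∂P θ = ∫ x, g x ∂P θ) →
      ∀ θ, variance g (P θ) ≤ variance g' (P θ)

lemma my_integrable_mul {𝓧 : Type*} [MeasurableSpace 𝓧] {μ : Measure 𝓧} [IsFiniteMeasure μ]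
    {f h : 𝓧 → ℝ} (hf : MemLp f 2 μ) (hh : MemLp h 2 μ) :
    Integrable (fun x => f x * h x) μ := by
  have := (MemLp.smul (r := 1) hh hf (hpqr := ⟨by simp; rw [ENNReal.inv_two_add_inv_two]⟩)).integrable le_rfl
  exact this

lemma my_variance_expand {𝓧 : Type*} [MeasurableSpace 𝓧] {μ : Measure 𝓧}
    [IsProbabilityMeasure μ] {f : 𝓧 → ℝ} (hf : MemLp f 2 μ) :
    variance f μ = (∫ x, f x ^ 2 ∂μ) - (∫ x, f x ∂μ) ^ 2 := by
  rw [variance_eq_sub hf]; rfl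

lemma my_integrable_sq {𝓧 : Type*} [MeasurableSpace 𝓧] {μ : Measure 𝓧}
    {f : 𝓧 → ℝ} (hf : MemLp f 2 μ) : Integrable (fun x => f x ^ 2) μ := hf.integrable_sq

theorem stmt1 {𝓧 Θ : Type*} [MeasurableSpace 𝓧] (P : Θ → Measure 𝓧)
    [∀ θ, IsProbabilityMeasure (P θ)] (g : 𝓧 → ℝ)
    (hg : Measurable g) (hg2 : ∀ θ, MemLp g 2 (P θ)) :
    IsUMVUE P g ↔ ∀ χ : 𝓧 → ℝ, IsUEZero P χ → ∀ θ, ∫ x, g x * χ x ∂P θ = 0 := by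
  constructor
  · rintro ⟨-, -, hmin⟩ χ ⟨hχm, hχ2, hχ0⟩ θ
    set I := ∫ x, g x * χ x ∂P θ with hIdef
    set J := ∫ x, χ x ^ 2 ∂P θ with hJdef
    have hJ : 0 ≤ J := integral_nonneg fun x => sq_nonneg _
    have key : ∀ c : ℝ, 0 ≤ 2 * c * I + c ^ 2 * J := by
      intro c
      have hmeas : Measurable (fun x => g x + c * χ x) := hg.add (hχm.const_mul c)
      have hmem : ∀ θ', MemLp (fun x => g x + c * χ x) 2 (P θ') := fun θ' =>
        (hg2 θ').add ((hχ2 θ').const_mul c)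
      have hmean : ∀ θ', ∫ x, (g x + c * χ x) ∂P θ' = ∫ x, g x ∂P θ' := by
        intro θ'
        rw [integral_add ((hg2 θ').integrable one_le_two)
          (((hχ2 θ').integrable one_le_two).const_mul c), integral_const_mul, hχ0 θ']
        ring
      have h1 := hmin _ hmeas hmem hmean θ
      have hsum2 : ∫ x, (g x + c * χ x) ^ 2 ∂P θ
          = ∫ x, g x ^ 2 ∂P θ + (2 * c * I + c ^ 2 * J) := by
        have e : (fun x => (g x + c * χ x) ^ 2)
            = fun x => g x ^ 2 + ((2 * c) * (g x * χ x) + c ^ 2 * χ x ^ 2) := by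
          funext x; ring
        have i1 : Integrable (fun x => 2 * c * (g x * χ x)) (P θ) :=
          (my_integrable_mul (hg2 θ) (hχ2 θ)).const_mul _
        have i2 : Integrable (fun x => c ^ 2 * χ x ^ 2) (P θ) :=
          (my_integrable_sq (hχ2 θ)).const_mul _
        calc ∫ x, (g x + c * χ x) ^ 2 ∂P θ
            = ∫ x, (g x ^ 2 + (2 * c * (g x * χ x) + c ^ 2 * χ x ^ 2)) ∂P θ := by rw [e]
          _ = (∫ x, g x ^ 2 ∂P θ)
              + ∫ x, (2 * c * (g x * χ x) + c ^ 2 * χ x ^ 2) ∂P θ :=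
            integral_add (my_integrable_sq (hg2 θ)) (i1.add i2)
          _ = (∫ x, g x ^ 2 ∂P θ) + ((∫ x, 2 * c * (g x * χ x) ∂P θ)
              + ∫ x, c ^ 2 * χ x ^ 2 ∂P θ) := by rw [integral_add i1 i2]
          _ = ∫ x, g x ^ 2 ∂P θ + (2 * c * I + c ^ 2 * J) := by
            rw [integral_const_mul, integral_const_mul, hIdef, hJdef]
      rw [my_variance_expand (hg2 θ), my_variance_expand (hmem θ), hsum2, hmean θ] at h1
      linarith
    have h2 := key (-I / (J + 1))
    have hd : (0 : ℝ) < J + 1 := by linarith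
    have h3 : (2 * (-I / (J + 1)) * I + (-I / (J + 1)) ^ 2 * J) * (J + 1) ^ 2
        = -(I ^ 2 * (J + 2)) := by
      field_simp; ring
    have h6 : 0 ≤ (2 * (-I / (J + 1)) * I + (-I / (J + 1)) ^ 2 * J) * (J + 1) ^ 2 :=
      mul_nonneg h2 (sq_nonneg _)
    have h4 : I ^ 2 ≤ 0 := by nlinarith [h6, h3, hJ]
    have h5 : I ^ 2 = 0 := le_antisymm h4 (sq_nonneg I)
    exact sq_eq_zero_iff.mp h5
  · intro h
    refine ⟨hg, hg2, fun g' hg' hg2' hmean θ => ?_⟩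
    have hχ : IsUEZero P (fun x => g' x - g x) :=
      ⟨hg'.sub hg, fun θ' => (hg2' θ').sub (hg2 θ'), fun θ' => by
        rw [integral_sub ((hg2' θ').integrable one_le_two) ((hg2 θ').integrable one_le_two),
          hmean θ', sub_self]⟩
    have hI : ∫ x, g x * (g' x - g x) ∂P θ = 0 := h _ hχ θ
    have hgg' : ∫ x, g x * g' x ∂P θ = ∫ x, g x ^ 2 ∂P θ := by
      have e : (fun x => g x * (g' x - g x)) = fun x => g x * g' x - g x ^ 2 := by
        funext x; ring
      rw [e, integral_sub (my_integrable_mul (hg2 θ) (hg2' θ)) (my_integrable_sq (hg2 θ)),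
        sub_eq_zero] at hI
      exact hI
    have hexp : ∫ x, (g' x - g x) ^ 2 ∂P θ
        = ∫ x, g' x ^ 2 ∂P θ - ∫ x, g x ^ 2 ∂P θ := by
      have e : (fun x => (g' x - g x) ^ 2)
          = fun x => g' x ^ 2 - (2 * (g x * g' x) - g x ^ 2) := by
        funext x; ring
      have i1 : Integrable (fun x => 2 * (g x * g' x)) (P θ) :=
        (my_integrable_mul (hg2 θ) (hg2' θ)).const_mul 2
      have i2 : Integrable (fun x => 2 * (g x * g' x) - g x ^ 2) (P θ) :=
        i1.sub (my_integrable_sq (hg2 θ))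
      calc ∫ x, (g' x - g x) ^ 2 ∂P θ
          = ∫ x, (g' x ^ 2 - (2 * (g x * g' x) - g x ^ 2)) ∂P θ := by rw [e]
        _ = (∫ x, g' x ^ 2 ∂P θ) - ∫ x, (2 * (g x * g' x) - g x ^ 2) ∂P θ :=
          integral_sub (my_integrable_sq (hg2' θ)) i2
        _ = (∫ x, g' x ^ 2 ∂P θ) - ((∫ x, 2 * (g x * g' x) ∂P θ) - ∫ x, g x ^ 2 ∂P θ) := by
          rw [integral_sub i1 (my_integrable_sq (hg2 θ))]
        _ = ∫ x, g' x ^ 2 ∂P θ - ∫ x, g x ^ 2 ∂P θ := by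
          rw [integral_const_mul, hgg']; ring
    have hdiff : 0 ≤ ∫ x, (g' x - g x) ^ 2 ∂P θ := integral_nonneg fun x => sq_nonneg _
    rw [my_variance_expand (hg2 θ), my_variance_expand (hg2' θ), hmean θ]
    linarith
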